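/- Let Γ be a uniform ranked poset and R = R(Γ). Then the augmentation ideal R_+ is the internal direct sum of the right ideals r_x R over x ∈ Γ′: R_+ = ⊕_{x ∈ Γ′} r_x R. -/

import Mathlib

set_option linter.unusedSectionVars false
set_option linter.unusedVariables false

open scoped Classical

variable {Γ : Type*} [PartialOrder Γ] [OrderBot Γ] [Fintype Γ]

/-- `rk` is a rank function for the finite poset `Γ` (with least element `⊥`):
the bottom has rank `0` and ranks increase by one along covering relations.
Equivalently, all maximal chains in `[⊥, x]` have the same length `rk x`. -/
def IsRanked (rk : Γ → ℕ) : Prop :=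
  rk ⊥ = 0 ∧ ∀ a b : Γ, a ⋖ b → rk b = rk a + 1

/-- `rankSet rk x n` is the set `S_x(n) = {y ≤ x : rk x - rk y = n}`. -/
def rankSet (rk : Γ → ℕ) (x : Γ) (n : ℕ) : Set Γ := {y | y ≤ x ∧ rk y + n = rk x}

/-- `Γ` is uniform: for each `a`, the equivalence relation on `S_a(1)` generated by
`b ∼ c` whenever `S_b(1) ∩ S_c(1) ≠ ∅` has at most one equivalence class. -/
def Uniform (rk : Γ → ℕ) : Prop :=
  ∀ a b c : Γ, b ∈ rankSet rk a 1 → c ∈ rankSet rk a 1 →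
    Relation.EqvGen
      (fun u v => u ∈ rankSet rk a 1 ∧ v ∈ rankSet rk a 1 ∧
        (rankSet rk u 1 ∩ rankSet rk v 1).Nonempty)
      b c

/-- `Γ' = Γ \ {⊥}`, indexing the generators `r_x`. -/
abbrev Vert (Γ : Type*) [PartialOrder Γ] [OrderBot Γ] := {x : Γ // x ≠ (⊥ : Γ)}

variable (F : Type*) [Field F]

/-- The generator `r_x` of the tensor algebra `T(W)` on the vector space `W` with
basis `{r_x : x ∈ Γ'}`, realized as the free algebra on `Γ'`. -/
noncomputable def gen (x : Vert Γ) : FreeAlgebra F (Vert Γ) := FreeAlgebra.ι F x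

/-- `r_x(n) = Σ_{y ∈ S_x(n)} r_y ∈ W` (which is `0` for `n ≥ rk x`). -/
noncomputable def rxn (rk : Γ → ℕ) (x : Γ) (n : ℕ) : FreeAlgebra F (Vert Γ) :=
  ∑ y ∈ Finset.univ.filter (fun y : Vert Γ => y.1 ∈ rankSet rk x n), gen F y

/-- The quadratic relations spanning `I_2`: `r_x ⊗ r_y` for `y ∉ S_x(1)`, and
`r_x ⊗ r_x(1)`, for `x, y ∈ Γ'`. -/
inductive GRel (F : Type*) [Field F] {Γ : Type*} [PartialOrder Γ] [OrderBot Γ]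
    [Fintype Γ] (rk : Γ → ℕ) :
    FreeAlgebra F (Vert Γ) → FreeAlgebra F (Vert Γ) → Prop
  | mono (x y : Vert Γ) (h : y.1 ∉ rankSet rk x.1 1) : GRel F rk (gen F x * gen F y) 0
  | adj (x : Vert Γ) : GRel F rk (gen F x * rxn F rk x.1 1) 0

/-- The quadratic algebra `R(Γ) = T(W)/I`, where `I` is the two-sided ideal
generated by `I_2`. -/
abbrev RGamma (rk : Γ → ℕ) := RingQuot (GRel F rk)

/-- The image of `r_x` in `R(Γ)`. -/
noncomputable def rbar (rk : Γ → ℕ) (x : Vert Γ) : RGamma F rk :=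
  RingQuot.mkAlgHom F (GRel F rk) (gen F x)

/-- The image of `r_x(n)` in `R(Γ)`. -/
noncomputable def rxnbar (rk : Γ → ℕ) (x : Γ) (n : ℕ) : RGamma F rk :=
  RingQuot.mkAlgHom F (GRel F rk) (rxn F rk x n)

/-- The right ideal `r_x R = {r_x · s : s ∈ R}`, as an `F`-submodule of `R(Γ)`. -/
noncomputable def rIdeal (rk : Γ → ℕ) (x : Vert Γ) : Submodule F (RGamma F rk) :=
  LinearMap.range (LinearMap.mulLeft F (rbar F rk x))

/-- `H_x(n) = Σ_{y ∈ Γ', y ∉ S_x(n)} r_y R`. -/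
noncomputable def Hsub (rk : Γ → ℕ) (x : Γ) (n : ℕ) : Submodule F (RGamma F rk) :=
  ⨆ (y : Vert Γ) (_ : y.1 ∉ rankSet rk x n), rIdeal F rk y

/-- The degree-one component `W` of `T(W)`: the span of the generators `r_x`. -/
noncomputable def Wsub : Submodule F (FreeAlgebra F (Vert Γ)) :=
  Submodule.span F (Set.range (gen F (Γ := Γ)))

/-- The graded component `R_m` of `R(Γ)`: the image of `W^{⊗m}`. -/
noncomputable def Rcomp (rk : Γ → ℕ) (m : ℕ) : Submodule F (RGamma F rk) :=
  Submodule.map (RingQuot.mkAlgHom F (GRel F rk)).toLinearMap ((Wsub F (Γ := Γ)) ^ m)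

/-- The augmentation ideal `R_+ = ⊕_{m ≥ 1} R_m` of `R(Γ)`. -/
noncomputable def Rplus (rk : Γ → ℕ) : Submodule F (RGamma F rk) :=
  ⨆ m : ℕ, Rcomp F rk (m + 1)

namespace AugAux
variable {Γ : Type*} [PartialOrder Γ] [OrderBot Γ] [Fintype Γ]
variable (F : Type*) [Field F]

noncomputable def eqv : FreeAlgebra F (Vert Γ) ≃ₐ[F] MonoidAlgebra F (FreeMonoid (Vert Γ)) :=
  FreeAlgebra.equivMonoidAlgebraFreeMonoid (R := F) (X := Vert Γ)

noncomputable def Qm (x : Vert Γ) :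
    MonoidAlgebra F (FreeMonoid (Vert Γ)) →ₗ[F] MonoidAlgebra F (FreeMonoid (Vert Γ)) :=
  (MonoidAlgebra.coeffLinearEquiv F).symm.toLinearMap ∘ₗ
    Finsupp.lsum F (fun (w : FreeMonoid (Vert Γ)) =>
      if w.toList.head? = some x then Finsupp.lsingle w else 0) ∘ₗ
    (MonoidAlgebra.coeffLinearEquiv F).toLinearMap

lemma Qm_single (x : Vert Γ) (w : FreeMonoid (Vert Γ)) (c : F) :
    Qm F x (MonoidAlgebra.single w c) =
      if w.toList.head? = some x then MonoidAlgebra.single w c else 0 := by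
  show (MonoidAlgebra.coeffLinearEquiv F).symm (Finsupp.lsum F _ (Finsupp.single w c)) = _
  rw [Finsupp.lsum_single]
  split <;> simp

noncomputable def em : MonoidAlgebra F (FreeMonoid (Vert Γ)) →ₗ[F] F :=
  Finsupp.lapply 1 ∘ₗ (MonoidAlgebra.coeffLinearEquiv F).toLinearMap

lemma em_single (w : FreeMonoid (Vert Γ)) (c : F) :
    em F (MonoidAlgebra.single w c) = if w = 1 then c else 0 := by
  show (Finsupp.single w c : FreeMonoid (Vert Γ) →₀ F) 1 = _
  rw [Finsupp.single_apply]

lemma fm_eq_one_iff {α : Type*} (u : FreeMonoid α) : u = 1 ↔ u.toList = [] :=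
  ⟨fun h => h ▸ rfl, fun h => by
    have := congrArg FreeMonoid.ofList h
    simpa using this⟩

lemma Qm_mul (x : Vert Γ) (f g : MonoidAlgebra F (FreeMonoid (Vert Γ))) :
    Qm F x (f * g) = Qm F x f * g + em F f • Qm F x g := by
  induction f using MonoidAlgebra.induction_linear with
  | zero => simp
  | add f₁ f₂ h₁ h₂ =>
    rw [add_mul, map_add, h₁, h₂, map_add, map_add, add_mul, add_smul]
    abel
  | single u c =>
    induction g using MonoidAlgebra.induction_linear with
    | zero => simp
    | add g₁ g₂ h₁ h₂ =>
      rw [mul_add, map_add, h₁, h₂, map_add, mul_add, smul_add]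
      abel
    | single v d =>
      rw [MonoidAlgebra.single_mul_single, Qm_single, Qm_single, Qm_single, em_single]
      by_cases hu : u = 1
      · subst hu
        rw [one_mul, if_pos rfl]
        simp only [FreeMonoid.toList_one, List.head?_nil, reduceCtorEq, if_false, zero_mul,
          zero_add]
        split
        · rw [MonoidAlgebra.smul_single', mul_comm]  -- careful
        · rw [smul_zero]
      · have hnil : u.toList ≠ [] := fun h => hu ((fm_eq_one_iff u).mpr h)
        rw [if_neg hu, zero_smul, add_zero]
        have hh : (u * v).toList.head? = u.toList.head? := by
          rw [FreeMonoid.toList_mul]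
          exact List.head?_append_of_ne_nil _ hnil
        rw [hh]
        split
        · rw [MonoidAlgebra.single_mul_single]
        · rw [zero_mul]

lemma em_mul (f g : MonoidAlgebra F (FreeMonoid (Vert Γ))) :
    em F (f * g) = em F f * em F g := by
  induction f using MonoidAlgebra.induction_linear with
  | zero => simp
  | add f₁ f₂ h₁ h₂ =>
    rw [add_mul, map_add, h₁, h₂, map_add, add_mul]
  | single u c =>
    induction g using MonoidAlgebra.induction_linear with
    | zero => simp
    | add g₁ g₂ h₁ h₂ =>
      rw [mul_add, map_add, h₁, h₂, map_add, mul_add]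
    | single v d =>
      rw [MonoidAlgebra.single_mul_single, em_single, em_single, em_single]
      by_cases hu : u = 1
      · subst hu
        rw [one_mul, if_pos rfl]
        split <;> simp
      · have h1 : u * v ≠ 1 := fun h => by
          rw [fm_eq_one_iff, FreeMonoid.toList_mul, List.append_eq_nil_iff] at h
          exact hu ((fm_eq_one_iff u).mpr h.1)
        rw [if_neg h1, if_neg hu, zero_mul]


variable {Γ' : Type*}

/-- head-projection on the free algebra -/
noncomputable def Pl (x : Vert Γ) :
    FreeAlgebra F (Vert Γ) →ₗ[F] FreeAlgebra F (Vert Γ) :=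
  (eqv F).symm.toLinearMap ∘ₗ Qm F x ∘ₗ (eqv F).toLinearMap

noncomputable def el : FreeAlgebra F (Vert Γ) →ₗ[F] F :=
  em F ∘ₗ (eqv F).toLinearMap

lemma Pl_mul (x : Vert Γ) (a b : FreeAlgebra F (Vert Γ)) :
    Pl F x (a * b) = Pl F x a * b + el F a • Pl F x b := by
  simp only [Pl, el, LinearMap.comp_apply, AlgEquiv.toLinearMap_apply, map_mul]
  rw [Qm_mul, map_add, map_mul, map_smul]
  rw [AlgEquiv.symm_apply_apply]

lemma el_mul (a b : FreeAlgebra F (Vert Γ)) : el F (a * b) = el F a * el F b := by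
  simp only [el, LinearMap.comp_apply, AlgEquiv.toLinearMap_apply, map_mul]
  rw [em_mul]

lemma eqv_gen (y : Vert Γ) :
    eqv F (gen F y) = MonoidAlgebra.single (FreeMonoid.of y) (1 : F) := by
  rw [eqv, gen, FreeAlgebra.equivMonoidAlgebraFreeMonoid]
  simp [MonoidAlgebra.of_apply]

lemma Pl_gen (x y : Vert Γ) :
    Pl F x (gen F y) = if y = x then gen F y else 0 := by
  simp only [Pl, LinearMap.comp_apply, AlgEquiv.toLinearMap_apply, eqv_gen, Qm_single]
  rw [FreeMonoid.toList_of]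
  simp only [List.head?_cons, Option.some.injEq]
  by_cases h : y = x
  · rw [if_pos h, if_pos h, ← eqv_gen, AlgEquiv.symm_apply_apply]
  · rw [if_neg h, if_neg h, map_zero]

lemma el_gen (y : Vert Γ) : el F (gen F y) = 0 := by
  simp only [el, LinearMap.comp_apply, AlgEquiv.toLinearMap_apply, eqv_gen, em_single]
  rw [if_neg]
  intro h
  have := congrArg FreeMonoid.toList h
  simp [FreeMonoid.toList_of] at this

lemma Pl_gen_mul (x y : Vert Γ) (a : FreeAlgebra F (Vert Γ)) :
    Pl F x (gen F y * a) = if y = x then gen F y * a else 0 := by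
  rw [Pl_mul, Pl_gen, el_gen, zero_smul, add_zero]
  split
  · rfl
  · rw [zero_mul]


variable (rk : Γ → ℕ)

lemma mk_rel {a b : FreeAlgebra F (Vert Γ)} (h : RingQuot.Rel (GRel F rk) a b) :
    RingQuot.mkAlgHom F (GRel F rk) a = RingQuot.mkAlgHom F (GRel F rk) b := by
  simp [RingQuot.mkAlgHom_def, RingQuot.mkRingHom_def, Quot.sound h]

lemma el_rel {a b : FreeAlgebra F (Vert Γ)} (h : RingQuot.Rel (GRel F rk) a b) :
    el F a = el F b := by
  induction h with
  | of h =>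
    cases h with
    | mono u y hy => rw [el_mul, el_gen, zero_mul, map_zero]
    | adj u => rw [el_mul, el_gen, zero_mul, map_zero]
  | add_left _ ih => rw [map_add, map_add, ih]
  | mul_left _ ih => rw [el_mul, el_mul, ih]
  | mul_right _ ih => rw [el_mul, el_mul, ih]

lemma mkP_rel (x : Vert Γ) {a b : FreeAlgebra F (Vert Γ)}
    (h : RingQuot.Rel (GRel F rk) a b) :
    RingQuot.mkAlgHom F (GRel F rk) (Pl F x a) =
      RingQuot.mkAlgHom F (GRel F rk) (Pl F x b) := by
  induction h with
  | of h =>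
    cases h with
    | mono u y hy =>
      rw [map_zero, map_zero, Pl_gen_mul]
      split
      · exact (RingQuot.mkAlgHom_rel F (GRel.mono u y hy)).trans (map_zero _)
      · rw [map_zero]
    | adj u =>
      rw [map_zero, map_zero, Pl_gen_mul]
      split
      · exact (RingQuot.mkAlgHom_rel F (GRel.adj u)).trans (map_zero _)
      · rw [map_zero]
  | add_left _ ih => rw [map_add, map_add, map_add, map_add, ih]
  | mul_left hab ih =>
    rw [Pl_mul, Pl_mul, map_add, map_add, map_mul, map_mul, map_smul, map_smul,
      ih, el_rel F rk hab]
  | mul_right hbc ih =>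
    rw [Pl_mul, Pl_mul, map_add, map_add, map_mul, map_mul, map_smul, map_smul,
      ih, mk_rel F rk hbc]

noncomputable def qfun (x : Vert Γ) : RGamma F rk → RGamma F rk :=
  fun t => Quot.lift (fun a => RingQuot.mkAlgHom F (GRel F rk) (Pl F x a))
    (fun _ _ h => mkP_rel F rk x h) t.toQuot

lemma qfun_mk (x : Vert Γ) (a : FreeAlgebra F (Vert Γ)) :
    qfun F rk x (RingQuot.mkAlgHom F (GRel F rk) a) =
      RingQuot.mkAlgHom F (GRel F rk) (Pl F x a) := by
  have h1 : RingQuot.mkAlgHom F (GRel F rk) a = RingQuot.mkRingHom (GRel F rk) a := by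
    rw [← RingQuot.mkAlgHom_coe F (GRel F rk)]
    rfl
  rw [h1, RingQuot.mkRingHom_def]
  rfl

noncomputable def qmap (x : Vert Γ) : RGamma F rk →ₗ[F] RGamma F rk where
  toFun := qfun F rk x
  map_add' := by
    intro t s
    obtain ⟨a, rfl⟩ := RingQuot.mkAlgHom_surjective F (GRel F rk) t
    obtain ⟨b, rfl⟩ := RingQuot.mkAlgHom_surjective F (GRel F rk) s
    rw [← map_add, qfun_mk, qfun_mk, qfun_mk, map_add, map_add]
  map_smul' := by
    intro c t
    obtain ⟨a, rfl⟩ := RingQuot.mkAlgHom_surjective F (GRel F rk) t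
    show qfun F rk x (c • RingQuot.mkAlgHom F (GRel F rk) a) =
      c • qfun F rk x (RingQuot.mkAlgHom F (GRel F rk) a)
    rw [← map_smul, qfun_mk, qfun_mk, map_smul, map_smul]

lemma qmap_mk_mul (x : Vert Γ) (a : FreeAlgebra F (Vert Γ)) :
    qmap F rk x (RingQuot.mkAlgHom F (GRel F rk) (gen F x * a)) =
      RingQuot.mkAlgHom F (GRel F rk) (gen F x * a) := by
  show qfun F rk x _ = _
  rw [qfun_mk, Pl_gen_mul, if_pos rfl]

lemma qmap_mk_mul_ne {x y : Vert Γ} (h : y ≠ x) (a : FreeAlgebra F (Vert Γ)) :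
    qmap F rk x (RingQuot.mkAlgHom F (GRel F rk) (gen F y * a)) = 0 := by
  show qfun F rk x _ = _
  rw [qfun_mk, Pl_gen_mul, if_neg h, map_zero]

end AugAux

/-- Lemma 3.2.  Let `Γ` be a uniform ranked poset and `R = R(Γ)`.
Then `R_+ = ⊕_{x ∈ Γ'} r_x R`: the augmentation ideal is the (internal direct) sum of
the right ideals `r_x R`, and this family of right ideals is independent. -/
theorem augmentation_ideal_directSum (rk : Γ → ℕ) (hrk : IsRanked rk)
    (hU : Uniform rk) :
    Rplus F rk = (⨆ x : Vert Γ, rIdeal F rk x) ∧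
      iSupIndep (fun x : Vert Γ => rIdeal F rk x) := by
  have mk_mulLeft : ∀ (y : Vert Γ) (b : FreeAlgebra F (Vert Γ)),
      LinearMap.mulLeft F (rbar F rk y) (RingQuot.mkAlgHom F (GRel F rk) b) =
        RingQuot.mkAlgHom F (GRel F rk) (gen F y * b) := by
    intro y b
    rw [LinearMap.mulLeft_apply, rbar, ← map_mul]
  constructor
  · apply le_antisymm
    · refine iSup_le fun m => ?_
      simp only [Rcomp]
      rw [Submodule.map_le_iff_le_comap, pow_succ']
      refine Submodule.mul_le.mpr fun w hw p hp => ?_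
      simp only [Wsub] at hw
      induction hw using Submodule.span_induction with
      | mem w hw =>
        obtain ⟨y, rfl⟩ := hw
        refine Submodule.mem_comap.mpr ?_
        refine (le_iSup (fun x => rIdeal F rk x) y) ?_
        refine LinearMap.mem_range.mpr ⟨RingQuot.mkAlgHom F (GRel F rk) p, ?_⟩
        rw [mk_mulLeft]
        rfl
      | zero =>
        rw [zero_mul]
        exact zero_mem _
      | add u v _ _ ihu ihv =>
        rw [add_mul]
        exact add_mem ihu ihv
      | smul c u _ ihu =>
        rw [smul_mul_assoc]
        exact Submodule.smul_mem _ c ihu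
    · refine iSup_le fun x => ?_
      rintro v ⟨t, rfl⟩
      obtain ⟨a, rfl⟩ := RingQuot.mkAlgHom_surjective F (GRel F rk) t
      rw [mk_mulLeft]
      -- show mk (gen x * a) ∈ Rplus
      have htop : a ∈ Submodule.span F
          ((Submonoid.closure (Set.range (gen F (Γ := Γ)))) : Set (FreeAlgebra F (Vert Γ))) := by
        rw [← Algebra.adjoin_eq_span (R := F) (A := FreeAlgebra F (Vert Γ))]
        have hr : Set.range (gen F (Γ := Γ)) = Set.range (FreeAlgebra.ι F) := rfl
        rw [hr, FreeAlgebra.adjoin_range_ι]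
        exact (Subalgebra.mem_toSubmodule _).mpr Algebra.mem_top
      induction htop using Submodule.span_induction with
      | mem u hu =>
        have hpow : ∃ m, u ∈ (Wsub F (Γ := Γ)) ^ m := by
          induction hu using Submonoid.closure_induction with
          | mem v hv => exact ⟨1, by rw [pow_one]; exact Submodule.subset_span hv⟩
          | one => exact ⟨0, by rw [pow_zero]; exact Submodule.one_le.mp le_rfl⟩
          | mul u' v' hu' hv' ihu ihv =>
            obtain ⟨m, hm⟩ := ihu
            obtain ⟨k, hk⟩ := ihv
            exact ⟨m + k, by rw [pow_add]; exact Submodule.mul_mem_mul hm hk⟩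
        obtain ⟨m, hm⟩ := hpow
        have h2 : gen F x * u ∈ (Wsub F (Γ := Γ)) ^ (m + 1) := by
          rw [pow_succ']
          exact Submodule.mul_mem_mul (Submodule.subset_span ⟨x, rfl⟩) hm
        have h3 : RingQuot.mkAlgHom F (GRel F rk) (gen F x * u) ∈ Rcomp F rk (m + 1) :=
          ⟨gen F x * u, h2, rfl⟩
        simp only [Rplus]
        exact le_iSup (fun m => Rcomp F rk (m + 1)) m h3
      | zero =>
        rw [mul_zero, map_zero]
        exact zero_mem _
      | add u v _ _ ihu ihv =>
        rw [mul_add, map_add]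
        exact add_mem ihu ihv
      | smul c u _ ihu =>
        rw [Algebra.mul_smul_comm, map_smul]
        exact Submodule.smul_mem _ c ihu
  · rw [iSupIndep_def]
    intro x
    rw [Submodule.disjoint_def]
    rintro v ⟨t, rfl⟩ hv2
    obtain ⟨a, rfl⟩ := RingQuot.mkAlgHom_surjective F (GRel F rk) t
    rw [mk_mulLeft] at hv2 ⊢
    have hker : (⨆ (y : Vert Γ) (_ : y ≠ x), rIdeal F rk y) ≤
        LinearMap.ker (AugAux.qmap F rk x) := by
      refine iSup_le fun y => iSup_le fun hy => ?_
      rintro w ⟨s, rfl⟩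
      obtain ⟨b, rfl⟩ := RingQuot.mkAlgHom_surjective F (GRel F rk) s
      rw [mk_mulLeft]
      exact LinearMap.mem_ker.mpr (AugAux.qmap_mk_mul_ne F rk hy b)
    have h2 : AugAux.qmap F rk x (RingQuot.mkAlgHom F (GRel F rk) (gen F x * a)) = 0 :=
      LinearMap.mem_ker.mp (hker hv2)
    rw [← AugAux.qmap_mk_mul F rk x a, h2]
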